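/- In the graph K_{d+1} ∗ K_d obtained by identifying a vertex of K_{d+1} with a vertex of K_d, the number of Hamiltonian subsets equals c(K_{d+1}) + c(K_d) = (3/2)·2^{d+1} - d^2 - 2d - 3, for d ≥ 3. -/

import Mathlib

/-- The number of Hamiltonian subsets of a graph `G`. -/
noncomputable def hamCount {V : Type*} (G : SimpleGraph V) : ℕ :=
  Nat.card {A : Set V | ∃ (v : V) (p : G.Walk v v), p.IsCycle ∧ {u | u ∈ p.support} = A}

/-- The graph `K_{d+1} ∗ K_d` on `2d` vertices: the vertices `0,…,d` form a clique with
`d+1` vertices, the vertices `d,…,2d-1` form a clique with `d` vertices, and the two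
cliques share the single vertex `d`. -/
def cliqueGlue (d : ℕ) : SimpleGraph (Fin (2 * d)) :=
  SimpleGraph.fromRel (fun u v => (u.val ≤ d ∧ v.val ≤ d) ∨ (d ≤ u.val ∧ d ≤ v.val))

open SimpleGraph List Finset

section Aux
variable {V : Type*} {G : SimpleGraph V}

variable {V : Type*} {G : SimpleGraph V}

/-- Build a walk from `b` to `a` through the list `l`. -/
def mkWalk (G : SimpleGraph V) (a : V) :
    (b : V) → (l : List V) → List.Chain G.Adj b (l ++ [a]) → G.Walk b a
  | b, [], h => SimpleGraph.Walk.cons (by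
      exact (List.isChain_cons_cons.mp h).1) SimpleGraph.Walk.nil
  | b, c :: l, h => SimpleGraph.Walk.cons
      (by exact (List.isChain_cons_cons.mp h).1)
      (mkWalk G a c l (by exact (List.isChain_cons_cons.mp h).2))

lemma mkWalk_support (G : SimpleGraph V) (a : V) :
    ∀ (b : V) (l : List V) (h : List.Chain G.Adj b (l ++ [a])),
      (mkWalk G a b l h).support = b :: l ++ [a]
  | b, [], h => by simp [mkWalk]
  | b, c :: l, h => by
      simp [mkWalk, mkWalk_support G a c l]; exact mkWalk_support G a c l _

lemma length_le_one_of_edge_end_start {u v : V} (q : G.Walk u v)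
    (hn : q.support.Nodup) (he : s(v, u) ∈ q.edges) : q.length ≤ 1 := by
  induction q with
  | nil => simp at he
  | @cons u x v h' q' ih =>
    rw [SimpleGraph.Walk.support_cons, List.nodup_cons] at hn
    rw [SimpleGraph.Walk.edges_cons, List.mem_cons] at he
    rcases he with he | he
    · rw [Sym2.eq_iff] at he
      rcases he with ⟨hv, hu⟩ | ⟨hv, hu⟩
      · subst hv; exact absurd q'.end_mem_support hn.1
      · subst hv
        have : q'.Nil := by
          cases q' with
          | nil => exact SimpleGraph.Walk.Nil.nil
          | cons h'' q'' =>
            exfalso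
            rw [SimpleGraph.Walk.support_cons, List.nodup_cons] at hn
            exact hn.2.1 q''.end_mem_support
        simp [SimpleGraph.Walk.nil_iff_length_eq.mp this]
    · exact absurd (q'.snd_mem_support_of_mem_edges he) hn.1

lemma exists_cycle_of_clique (s : Finset V) (hs : 3 ≤ s.card)
    (hadj : ∀ x ∈ s, ∀ y ∈ s, x ≠ y → G.Adj x y) :
    ∃ (v : V) (p : G.Walk v v), p.IsCycle ∧ {u | u ∈ p.support} = ↑s := by
  classical
  obtain ⟨a, c, l, hl0⟩ : ∃ a c l, s.toList = a :: c :: l := by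
    have hlen : s.toList.length = s.card := s.length_toList
    rcases h : s.toList with _ | ⟨a, _ | ⟨c, l⟩⟩
    · rw [h] at hlen; simp at hlen; omega
    · rw [h] at hlen; simp at hlen; omega
    · exact ⟨a, c, l, rfl⟩
  have hcard : s.card = l.length + 2 := by
    have := s.length_toList
    rw [hl0] at this; simp at this; omega
  have hnodup : (a :: c :: l).Nodup := hl0 ▸ s.nodup_toList
  have hmem : ∀ x ∈ a :: c :: l, x ∈ s := by
    intro x hx; rw [← Finset.mem_toList, hl0]; exact hx
  -- the rotated list
  have hperm : (a :: c :: l) ~ (c :: (l ++ [a])) :=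
    (List.perm_append_singleton a (c :: l)).symm
  have hnodup2 : (c :: (l ++ [a])).Nodup := hperm.nodup hnodup
  have hmem2 : ∀ x ∈ c :: (l ++ [a]), x ∈ s := fun x hx => hmem x (hperm.symm.subset hx)
  have hpw : (c :: (l ++ [a])).Pairwise G.Adj := by
    refine (List.Pairwise.imp_of_mem ?_ hnodup2)
    intro x y hx hy hxy
    exact hadj x (hmem2 x hx) y (hmem2 y hy) hxy
  have hchain : List.Chain G.Adj c (l ++ [a]) := hpw.chain
  set q : G.Walk c a := mkWalk G a c l hchain with hq
  have hqsupp : q.support = c :: l ++ [a] := mkWalk_support G a c l hchain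
  have hqnodup : q.support.Nodup := by rw [hqsupp]; simpa using hnodup2
  have hac : G.Adj a c := by
    refine hadj a (hmem a (by simp)) c (hmem c (by simp)) ?_
    intro h; rw [h] at hnodup; simp at hnodup
  refine ⟨a, SimpleGraph.Walk.cons hac q, ?_, ?_⟩
  · rw [SimpleGraph.Walk.cons_isCycle_iff]
    refine ⟨SimpleGraph.Walk.IsPath.mk' hqnodup, fun he => ?_⟩
    have h1 := length_le_one_of_edge_end_start q hqnodup he
    have h2 : q.support.length = (c :: l ++ [a]).length := congrArg List.length hqsupp
    rw [SimpleGraph.Walk.length_support] at h2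
    simp at h2; omega
    
  · ext z
    simp only [SimpleGraph.Walk.support_cons, Set.mem_setOf_eq, Finset.coe_sort_coe,
      List.mem_cons, hqsupp, Finset.mem_coe]
    constructor
    · rintro (rfl | hz)
      · exact hmem _ (by simp)
      · refine hmem z ?_
        simp at hz ⊢; tauto
    · intro hz
      rw [← Finset.mem_toList, hl0] at hz
      simp at hz ⊢; tauto


lemma cliqueGlue_adj {d : ℕ} {u v : Fin (2 * d)} :
    (cliqueGlue d).Adj u v ↔ u ≠ v ∧ ((u.val ≤ d ∧ v.val ≤ d) ∨ (d ≤ u.val ∧ d ≤ v.val)) := by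
  simp only [cliqueGlue, SimpleGraph.fromRel_adj]
  tauto

lemma walk_through_mid {d : ℕ} {u w : Fin (2 * d)} (p : (cliqueGlue d).Walk u w)
    (hu : u.val < d) (hw : d < w.val) : ∃ m ∈ p.support, m.val = d := by
  induction p with
  | nil => omega
  | @cons u x w h p ih =>
    rw [cliqueGlue_adj] at h
    have hx : x.val ≤ d := by omega
    rcases eq_or_lt_of_le hx with hxd | hxd
    · exact ⟨x, by simp, hxd⟩
    · obtain ⟨m, hm, hmd⟩ := ih hxd hw
      exact ⟨m, by simp [hm], hmd⟩

lemma mem_support_tail_of_closed {V : Type*} {G : SimpleGraph V} {v x : V}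
    {p : G.Walk v v} (hnil : ¬ p.Nil) (hx : x ∈ p.support) : x ∈ p.support.tail := by
  cases p with
  | nil => simp at hnil
  | cons h q =>
    rw [SimpleGraph.Walk.support_cons] at hx ⊢
    rw [List.tail_cons]
    rcases List.mem_cons.mp hx with rfl | hx
    · exact q.end_mem_support
    · exact hx

lemma cycle_side {d : ℕ} {v : Fin (2 * d)} {p : (cliqueGlue d).Walk v v}
    (hp : p.IsCycle) :
    (∀ x ∈ p.support, x.val ≤ d) ∨ (∀ x ∈ p.support, d ≤ x.val) := by
  by_contra hcon
  push_neg at hcon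
  obtain ⟨⟨x, hxm, hx⟩, ⟨y, hym, hy⟩⟩ := hcon
  set p' := p.rotate y hym with hp'def
  have hp'c : p'.IsCycle := hp.rotate hym
  have hxm' : x ∈ p'.support := by
    have h1 : x ∈ p.support.tail := mem_support_tail_of_closed hp.not_nil hxm
    have h2 := SimpleGraph.Walk.support_rotate p y hym
    exact List.mem_of_mem_tail (h2.perm.mem_iff.mpr h1)
  set q1 := p'.takeUntil x hxm' with hq1
  set q2 := p'.dropUntil x hxm' with hq2
  obtain ⟨m1, hm1, hm1d⟩ := walk_through_mid q1 hy hx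
  obtain ⟨m2, hm2r, hm2d⟩ := walk_through_mid q2.reverse hy hx
  have hm2 : m2 ∈ q2.support := by rwa [SimpleGraph.Walk.support_reverse, List.mem_reverse] at hm2r
  have hmeq : m1 = m2 := Fin.ext (by omega)
  subst hmeq
  have hspec : q1.append q2 = p' := p'.take_spec hxm'
  have hsupp : p'.support = q1.support ++ q2.support.tail := by
    rw [← hspec, SimpleGraph.Walk.support_append]
  have htail : p'.support.tail = q1.support.tail ++ q2.support.tail := by
    rw [hsupp, q1.support_eq_cons]
    simp
  have hnd : p'.support.tail.Nodup := hp'c.2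
  rw [htail, List.nodup_append] at hnd
  have hm1t : m1 ∈ q1.support.tail := by
    rw [q1.support_eq_cons] at hm1
    rcases List.mem_cons.mp hm1 with rfl | h
    · omega
    · exact h
  have hm2t : m1 ∈ q2.support.tail := by
    rw [q2.support_eq_cons] at hm2
    rcases List.mem_cons.mp hm2 with rfl | h
    · omega
    · exact h
  exact hnd.2.2 m1 hm1t m1 hm2t rfl


lemma support_set_ncard {V : Type*} {G : SimpleGraph V} {v : V} {p : G.Walk v v}
    (hp : p.IsCycle) : 3 ≤ {u | u ∈ p.support}.ncard := by
  classical
  have h1 : {u | u ∈ p.support} = ↑p.support.tail.toFinset := by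
    ext u
    simp only [Set.mem_setOf_eq, List.coe_toFinset]
    exact ⟨fun hu => mem_support_tail_of_closed hp.not_nil hu, fun hu => List.mem_of_mem_tail hu⟩
  rw [h1, Set.ncard_coe_finset, List.toFinset_card_of_nodup hp.2]
  have h2 := p.length_support
  have h3 := hp.three_le_length
  have h4 : p.support.tail.length = p.support.length - 1 := by simp
  omega

lemma natCard_setOf {V : Type*} [Fintype V] (P : Set V → Prop)
    [DecidablePred fun s : Finset V => P ↑s] :
    Nat.card {A : Set V | P A} = (Finset.univ.filter fun s : Finset V => P ↑s).card := by
  classical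
  have e : {s : Finset V // P ↑s} ≃ {A : Set V | P A} :=
    Equiv.subtypeEquiv Fintype.finsetEquivSet (by simp)
  rw [← Nat.card_congr e, Nat.card_eq_fintype_card, Fintype.card_subtype]

lemma countGE3 {V : Type*} [DecidableEq V] (t : Finset V) :
    ((t.powerset).filter fun s => 3 ≤ s.card).card
      = 2 ^ t.card - (1 + t.card + t.card.choose 2) := by
  classical
  have hsplit := Finset.card_filter_add_card_filter_not
    (s := t.powerset) (p := fun s => 3 ≤ s.card)
  rw [Finset.card_powerset] at hsplit
  have h02 : (t.powerset.filter fun s => ¬ 3 ≤ s.card)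
      = (Finset.powersetCard 0 t ∪ Finset.powersetCard 1 t) ∪ Finset.powersetCard 2 t := by
    ext s
    simp only [Finset.mem_filter, Finset.mem_union, Finset.mem_powersetCard,
      Finset.mem_powerset, not_le]
    constructor
    · rintro ⟨h1, h2⟩
      have : s.card = 0 ∨ s.card = 1 ∨ s.card = 2 := by omega
      tauto
    · rintro ((⟨h1, h2⟩ | ⟨h1, h2⟩) | ⟨h1, h2⟩) <;> exact ⟨h1, by omega⟩
  have d12 : Disjoint (Finset.powersetCard 0 t) (Finset.powersetCard 1 t) := by
    rw [Finset.disjoint_left]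
    intro s hs0 hs1
    rw [Finset.mem_powersetCard] at hs0 hs1; omega
  have d123 : Disjoint (Finset.powersetCard 0 t ∪ Finset.powersetCard 1 t)
      (Finset.powersetCard 2 t) := by
    rw [Finset.disjoint_left]
    intro s hs01 hs2
    rw [Finset.mem_union, Finset.mem_powersetCard, Finset.mem_powersetCard] at hs01
    rw [Finset.mem_powersetCard] at hs2; omega
  have hneg : (t.powerset.filter fun s => ¬ 3 ≤ s.card).card
      = 1 + t.card + t.card.choose 2 := by
    rw [h02, Finset.card_union_of_disjoint d123, Finset.card_union_of_disjoint d12,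
      Finset.card_powersetCard, Finset.card_powersetCard, Finset.card_powersetCard,
      Nat.choose_zero_right, Nat.choose_one_right]
  omega

lemma two_mul_choose_two (n : ℕ) : 2 * n.choose 2 = n * (n - 1) := by
  induction n with
  | zero => simp
  | succ m ih =>
    rw [Nat.choose_succ_succ, Nat.choose_one_right, Nat.mul_add, ih]
    rcases m with _ | k
    · simp
    · simp only [Nat.succ_sub_one]
      ring

lemma sum3_le (n : ℕ) : 1 + n + n.choose 2 ≤ 2 ^ n := by
  induction n with
  | zero => simp
  | succ m ih =>
    have h1 : m < 2 ^ m := Nat.lt_two_pow_self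
    rw [Nat.choose_succ_succ, Nat.choose_one_right, pow_succ]
    have : m.choose (Nat.succ 1) = m.choose 2 := rfl
    omega

lemma hamCount_top (n : ℕ) : hamCount (⊤ : SimpleGraph (Fin n)) = 2 ^ n - (1 + n + n.choose 2) := by
  classical
  unfold hamCount
  have hchar : {A : Set (Fin n) | ∃ (v : Fin n) (p : (⊤ : SimpleGraph (Fin n)).Walk v v),
      p.IsCycle ∧ {u | u ∈ p.support} = A} = {A : Set (Fin n) | 3 ≤ A.ncard} := by
    ext A
    constructor
    · rintro ⟨v, p, hc, rfl⟩
      exact support_set_ncard hc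
    · intro hA
      simp only [Set.mem_setOf_eq] at hA
      have hA' : 3 ≤ A.toFinset.card := by
        rwa [Set.ncard_eq_toFinset_card'] at hA
      obtain ⟨v, p, hc, hs⟩ := exists_cycle_of_clique (G := (⊤ : SimpleGraph (Fin n)))
        A.toFinset hA' (fun x _ y _ hxy => by simpa using hxy)
      simp only [Set.mem_setOf_eq]
      exact ⟨v, p, hc, by rwa [Set.coe_toFinset] at hs⟩
  rw [hchar, natCard_setOf (P := fun A : Set (Fin n) => 3 ≤ A.ncard)]
  have hfe : (Finset.univ.filter fun s : Finset (Fin n) => 3 ≤ (↑s : Set (Fin n)).ncard)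
      = Finset.univ.filter fun s : Finset (Fin n) => 3 ≤ s.card := by
    simp only [Set.ncard_coe_finset]
  rw [hfe, ← Finset.powerset_univ, countGE3, Finset.card_univ, Fintype.card_fin]

lemma card_filter_le (d : ℕ) (hd : 1 ≤ d) :
    ((Finset.univ : Finset (Fin (2 * d))).filter fun v => v.val ≤ d).card = d + 1 := by
  have h : ((Finset.univ : Finset (Fin (2 * d))).filter fun v => v.val ≤ d)
      = (Finset.range (d + 1)).attachFin (fun m hm => by
          rw [Finset.mem_range] at hm; omega) := by
    ext v
    simp only [Finset.mem_filter, Finset.mem_univ, true_and, Finset.mem_attachFin,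
      Finset.mem_range]
    omega
  rw [h, Finset.card_attachFin, Finset.card_range]

lemma card_filter_ge (d : ℕ) (hd : 1 ≤ d) :
    ((Finset.univ : Finset (Fin (2 * d))).filter fun v => d ≤ v.val).card = d := by
  have h : ((Finset.univ : Finset (Fin (2 * d))).filter fun v => d ≤ v.val)
      = (Finset.Ico d (2 * d)).attachFin (fun m hm => (Finset.mem_Ico.mp hm).2) := by
    ext v
    have := v.isLt
    simp only [Finset.mem_filter, Finset.mem_univ, true_and, Finset.mem_attachFin,
      Finset.mem_Ico]
    omega
  rw [h, Finset.card_attachFin, Nat.card_Ico]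
  omega

lemma hamCount_glue (d : ℕ) (hd : 3 ≤ d) :
    hamCount (cliqueGlue d)
      = (2 ^ (d + 1) - (1 + (d + 1) + (d + 1).choose 2)) + (2 ^ d - (1 + d + d.choose 2)) := by
  classical
  unfold hamCount
  have hchar : {A : Set (Fin (2 * d)) | ∃ (v : Fin (2 * d)) (p : (cliqueGlue d).Walk v v),
      p.IsCycle ∧ {u | u ∈ p.support} = A}
      = {A : Set (Fin (2 * d)) | 3 ≤ A.ncard ∧
          ((∀ x ∈ A, x.val ≤ d) ∨ (∀ x ∈ A, d ≤ x.val))} := by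
    ext A
    constructor
    · rintro ⟨v, p, hc, rfl⟩
      refine ⟨support_set_ncard hc, ?_⟩
      exact cycle_side hc
    · rintro ⟨hA, hside⟩
      have hA' : 3 ≤ A.toFinset.card := by
        rwa [Set.ncard_eq_toFinset_card'] at hA
      have hadj : ∀ x ∈ A.toFinset, ∀ y ∈ A.toFinset, x ≠ y → (cliqueGlue d).Adj x y := by
        intro x hx y hy hxy
        rw [Set.mem_toFinset] at hx hy
        rw [cliqueGlue_adj]
        rcases hside with hL | hR
        · exact ⟨hxy, Or.inl ⟨hL x hx, hL y hy⟩⟩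
        · exact ⟨hxy, Or.inr ⟨hR x hx, hR y hy⟩⟩
      obtain ⟨v, p, hc, hs⟩ := exists_cycle_of_clique A.toFinset hA' hadj
      simp only [Set.mem_setOf_eq]
      exact ⟨v, p, hc, by rwa [Set.coe_toFinset] at hs⟩
  rw [hchar, natCard_setOf (P := fun A : Set (Fin (2 * d)) => 3 ≤ A.ncard ∧ ((∀ x ∈ A, x.val ≤ d) ∨ (∀ x ∈ A, d ≤ x.val)))]
  set Lf := (Finset.univ : Finset (Fin (2 * d))).filter (fun v => v.val ≤ d) with hLf
  set Rf := (Finset.univ : Finset (Fin (2 * d))).filter (fun v => d ≤ v.val) with hRf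
  have hfe : (Finset.univ.filter fun s : Finset (Fin (2 * d)) =>
        3 ≤ (↑s : Set (Fin (2 * d))).ncard ∧
          ((∀ x ∈ (↑s : Set (Fin (2 * d))), x.val ≤ d) ∨ (∀ x ∈ (↑s : Set (Fin (2 * d))), d ≤ x.val)))
      = (Lf.powerset.filter fun s => 3 ≤ s.card) ∪ (Rf.powerset.filter fun s => 3 ≤ s.card) := by
    ext s
    simp only [Finset.mem_filter, Finset.mem_univ, true_and, Finset.mem_union,
      Finset.mem_powerset, Set.ncard_coe_finset, Finset.mem_coe, hLf, hRf,
      Finset.subset_iff]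
    constructor
    · rintro ⟨h1, h2 | h2⟩
      · exact Or.inl ⟨fun {x} hx => by simp [h2 x hx], h1⟩
      · exact Or.inr ⟨fun {x} hx => by simp [h2 x hx], h1⟩
    · rintro (⟨h2, h1⟩ | ⟨h2, h1⟩)
      · refine ⟨h1, Or.inl fun x hx => ?_⟩
        have := h2 x hx; exact this
      · refine ⟨h1, Or.inr fun x hx => ?_⟩
        have := h2 x hx; exact this
  rw [hfe]
  have hdisj : Disjoint (Lf.powerset.filter fun s => 3 ≤ s.card)
      (Rf.powerset.filter fun s => 3 ≤ s.card) := by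
    rw [Finset.disjoint_left]
    intro s hsL hsR
    rw [Finset.mem_filter, Finset.mem_powerset] at hsL hsR
    have hsub : s ⊆ {(⟨d, by omega⟩ : Fin (2 * d))} := by
      intro x hx
      have h1 := hsL.1 hx
      have h2 := hsR.1 hx
      rw [hLf, Finset.mem_filter] at h1
      rw [hRf, Finset.mem_filter] at h2
      simp only [Finset.mem_singleton]
      have hmid : (⟨d, by omega⟩ : Fin (2 * d)).val = d := rfl
      exact Fin.ext (by omega)
    have := Finset.card_le_card hsub
    simp at this
    omega
  rw [Finset.card_union_of_disjoint hdisj, countGE3, countGE3,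
    card_filter_le d (by omega), card_filter_ge d (by omega)]
end Aux

/-- For `d ≥ 3`, the number of Hamiltonian subsets of `K_{d+1} ∗ K_d` equals
`c(K_{d+1}) + c(K_d) = (3/2)·2^{d+1} - d² - 2d - 3`. -/
theorem stmt_2 (d : ℕ) (hd : 3 ≤ d) :
    hamCount (cliqueGlue d)
        = hamCount (⊤ : SimpleGraph (Fin (d + 1))) + hamCount (⊤ : SimpleGraph (Fin d)) ∧
    hamCount (cliqueGlue d) = 3 * 2 ^ d - d ^ 2 - 2 * d - 3 := by
  have hg := hamCount_glue d hd
  have ht1 := hamCount_top (d + 1)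
  have ht2 := hamCount_top d
  have hb1 := sum3_le (d + 1)
  have hb2 := sum3_le d
  have hc1 := two_mul_choose_two (d + 1)
  have hc2 := two_mul_choose_two d
  have hp : 2 ^ (d + 1) = 2 * 2 ^ d := by ring
  have hdd : (d + 1) * (d + 1 - 1) = d * d + d := by
    simp only [Nat.add_sub_cancel]; ring
  have hd2 : d * (d - 1) + d = d * d := by
    rcases d with _ | k
    · omega
    · simp only [Nat.succ_sub_one]; ring
  have hsq : d ^ 2 = d * d := by ring
  constructor
  · rw [hg, ht1, ht2]
  · rw [hg, hsq]
    omega
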